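/- Let n ≥ 1, A an n×n complex matrix, x, y ∈ ℂⁿ, and for j ≥ 0 let α_j(A) denote the coefficient of τ^j in G_{x,y}(A). Then for every integer m ≥ 1, the function ℂ → ℂ given by s ↦ α_m(A + s·I) is differentiable at 0 and its derivative at s = 0 equals (n+m)·α_{m−1}(A). (The identity ∂α_m/∂I_n = (n+m)·α_{m−1} used in the proof of Lemma 1.2(b).) -/

import Mathlib

open PowerSeries Finset

noncomputable section AlphaDerivAux

namespace AlphaDerivAux

/-- coefficients of `u^d` vanish below `d` when `u` has zero constant term. -/
lemma coeff_pow_eq_zero {u : ℂ⟦X⟧} (hu : constantCoeff (R := ℂ) u = 0) {j d : ℕ} (h : j < d) :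
    PowerSeries.coeff (R := ℂ) j (u ^ d) = 0 := by
  have hX : (X : ℂ⟦X⟧) ∣ u := X_dvd_iff.mpr hu
  have : (X : ℂ⟦X⟧) ^ d ∣ u ^ d := pow_dvd_pow_of_dvd hX d
  exact (X_pow_dvd_iff.mp this) j h

lemma coeff_aeval_eq_zero {u : ℂ⟦X⟧} (hu : constantCoeff (R := ℂ) u = 0) (r : Polynomial ℂ) (j : ℕ)
    (h : ∀ d ≤ j, r.coeff d = 0) : PowerSeries.coeff (R := ℂ) j (Polynomial.aeval u r) = 0 := by
  obtain ⟨N, hN⟩ : ∃ N, r.natDegree < N := ⟨r.natDegree + 1, Nat.lt_succ_self _⟩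
  rw [Polynomial.aeval_eq_sum_range' hN, map_sum]
  refine Finset.sum_eq_zero fun d _ => ?_
  rw [PowerSeries.coeff_smul, smul_eq_mul]
  rcases le_or_gt d j with hd | hd
  · rw [h d hd, zero_mul]
  · rw [coeff_pow_eq_zero hu hd, mul_zero]

/-- the evaluation (substitution) of a power series at `u`. -/
def evFun (u : ℂ⟦X⟧) (F : ℂ⟦X⟧) : ℂ⟦X⟧ :=
  PowerSeries.mk fun j => PowerSeries.coeff (R := ℂ) j (Polynomial.aeval u (trunc (j + 1) F))

lemma coeff_evFun {u : ℂ⟦X⟧} (hu : constantCoeff (R := ℂ) u = 0) (F : ℂ⟦X⟧) {j N : ℕ} (h : j < N) :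
    PowerSeries.coeff (R := ℂ) j (evFun u F) = PowerSeries.coeff (R := ℂ) j (Polynomial.aeval u (trunc N F)) := by
  rw [evFun, coeff_mk]
  have key : PowerSeries.coeff (R := ℂ) j (Polynomial.aeval u (trunc N F - trunc (j + 1) F)) = 0 := by
    refine coeff_aeval_eq_zero hu _ _ fun d hd => ?_
    rw [Polynomial.coeff_sub, PowerSeries.coeff_trunc, PowerSeries.coeff_trunc,
      if_pos (lt_of_le_of_lt hd h), if_pos (Nat.lt_succ_of_le hd), sub_self]
  rw [map_sub, map_sub, sub_eq_zero] at key
  exact key.symm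

/-- `evFun u` as a ring homomorphism, for `u` with zero constant term. -/
def ev (u : ℂ⟦X⟧) (hu : constantCoeff (R := ℂ) u = 0) : ℂ⟦X⟧ →+* ℂ⟦X⟧ where
  toFun := evFun u
  map_one' := by
    ext j
    rw [coeff_evFun hu 1 (Nat.lt_succ_self j), trunc_one, map_one]
  map_mul' F G := by
    ext j
    rw [coeff_evFun hu (F * G) (Nat.lt_succ_self j), PowerSeries.coeff_mul]
    have hR : ∀ p ∈ antidiagonal j,
        PowerSeries.coeff (R := ℂ) p.1 (evFun u F) * PowerSeries.coeff (R := ℂ) p.2 (evFun u G) =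
        PowerSeries.coeff (R := ℂ) p.1 (Polynomial.aeval u (trunc (j + 1) F)) *
          PowerSeries.coeff (R := ℂ) p.2 (Polynomial.aeval u (trunc (j + 1) G)) := by
      intro p hp
      have hp' := Finset.HasAntidiagonal.mem_antidiagonal.mp hp
      rw [coeff_evFun hu F (show p.1 < j + 1 by omega),
        coeff_evFun hu G (show p.2 < j + 1 by omega)]
    rw [Finset.sum_congr rfl hR, ← PowerSeries.coeff_mul, ← map_mul]
    have key : PowerSeries.coeff (R := ℂ) j
        (Polynomial.aeval u (trunc (j + 1) (F * G) - trunc (j + 1) F * trunc (j + 1) G)) = 0 := by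
      refine coeff_aeval_eq_zero hu _ _ fun d hd => ?_
      rw [Polynomial.coeff_sub, PowerSeries.coeff_trunc, if_pos (Nat.lt_succ_of_le hd),
        Polynomial.coeff_mul, PowerSeries.coeff_mul, sub_eq_zero]
      refine (Finset.sum_congr rfl fun p hp => ?_).symm
      have hp' := Finset.HasAntidiagonal.mem_antidiagonal.mp hp
      rw [PowerSeries.coeff_trunc, PowerSeries.coeff_trunc, if_pos (by omega), if_pos (by omega)]
    rw [map_sub, map_sub, sub_eq_zero] at key
    exact key
  map_zero' := by
    ext j
    rw [coeff_evFun hu 0 (Nat.lt_succ_self j)]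
    simp [map_zero]
  map_add' F G := by
    ext j
    show PowerSeries.coeff (R := ℂ) j (evFun u (F + G)) =
      PowerSeries.coeff (R := ℂ) j (evFun u F + evFun u G)
    rw [map_add (PowerSeries.coeff (R := ℂ) j), coeff_evFun hu (F + G) (Nat.lt_succ_self j),
      coeff_evFun hu F (Nat.lt_succ_self j), coeff_evFun hu G (Nat.lt_succ_self j),
      map_add (trunc _) F G, map_add, map_add]

lemma ev_C (u : ℂ⟦X⟧) (hu : constantCoeff (R := ℂ) u = 0) (c : ℂ) :
    ev u hu (PowerSeries.C (R := ℂ) c) = PowerSeries.C (R := ℂ) c := by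
  ext j
  show PowerSeries.coeff (R := ℂ) j (evFun u (PowerSeries.C (R := ℂ) c)) = _
  rw [coeff_evFun hu _ (Nat.lt_succ_self j), trunc_C, Polynomial.aeval_C]
  rfl

lemma ev_X (u : ℂ⟦X⟧) (hu : constantCoeff (R := ℂ) u = 0) : ev u hu X = u := by
  ext j
  show PowerSeries.coeff (R := ℂ) j (evFun u X) = _
  rw [coeff_evFun hu _ (by omega : j < j + 2), trunc_X, Polynomial.aeval_X]

/-- expansion of `ev u G` coefficients. -/
lemma coeff_ev (u : ℂ⟦X⟧) (hu : constantCoeff (R := ℂ) u = 0) (G : ℂ⟦X⟧) {q N : ℕ} (h : q < N + 1) :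
    PowerSeries.coeff (R := ℂ) q (ev u hu G) =
      ∑ k ∈ range (N + 1), PowerSeries.coeff (R := ℂ) k G * PowerSeries.coeff (R := ℂ) q (u ^ k) := by
  show PowerSeries.coeff (R := ℂ) q (evFun u G) = _
  rw [coeff_evFun hu G h,
    Polynomial.aeval_eq_sum_range' (natDegree_trunc_lt G N) u, map_sum]
  refine Finset.sum_congr rfl fun k hk => ?_
  rw [PowerSeries.coeff_smul, smul_eq_mul, PowerSeries.coeff_trunc,
    if_pos (Finset.mem_range.mp hk)]

/-- inverse uniqueness for power series over ℂ. -/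
lemma psinv_eq {d z : ℂ⟦X⟧} (h0 : constantCoeff (R := ℂ) d ≠ 0) (h : d * z = 1) : d⁻¹ = z := by
  have h2 := PowerSeries.mul_inv_cancel d h0
  calc d⁻¹ = d⁻¹ * (d * z) := by rw [h, mul_one]
    _ = (d * d⁻¹) * z := by ring
    _ = z := by rw [h2, one_mul]

lemma constantCoeff_det_one_sub_smul {n : ℕ} (t : ℂ⟦X⟧) (ht : constantCoeff (R := ℂ) t = 0)
    (B : Matrix (Fin n) (Fin n) ℂ⟦X⟧) :
    constantCoeff (R := ℂ) (1 - t • B).det = 1 := by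
  rw [RingHom.map_det]
  have : (constantCoeff (R := ℂ)).mapMatrix (1 - t • B) = 1 := by
    ext i j
    simp [RingHom.mapMatrix_apply, Matrix.map_apply, Matrix.sub_apply, Matrix.smul_apply,
      Matrix.one_apply, ht, apply_ite (constantCoeff (R := ℂ))]
  rw [this, Matrix.det_one]

lemma coeff_V_pow (s : ℂ) (r j : ℕ) :
    PowerSeries.coeff (R := ℂ) j (((1 - PowerSeries.C (R := ℂ) s * X)⁻¹ : ℂ⟦X⟧) ^ (r + 1)) =
      (Nat.choose (r + j) r : ℂ) * s ^ j := by
  set w : ℂ⟦X⟧ := 1 - PowerSeries.C (R := ℂ) s * X with hwdef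
  have hw0 : constantCoeff (R := ℂ) w = 1 := by
    simp [hwdef]
  have hwV : w * w⁻¹ = 1 := PowerSeries.mul_inv_cancel _ (by rw [hw0]; exact one_ne_zero)
  have hw : w = rescale s (1 - X) := by
    rw [map_sub, map_one, rescale_X]
  have hmul1 : ((1 - X : ℂ⟦X⟧) ^ (r + 1)) * (invOneSubPow ℂ (r + 1)).val = 1 := by
    rw [← invOneSubPow_inv_eq_one_sub_pow]
    exact (invOneSubPow ℂ (r + 1)).inv_val
  have hval : w ^ (r + 1) * rescale s ((invOneSubPow ℂ (r + 1)).val) = 1 := by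
    rw [hw, ← map_pow, ← map_mul, hmul1, map_one]
  have hpow : w ^ (r + 1) * (w⁻¹) ^ (r + 1) = 1 := by
    rw [← mul_pow, hwV, one_pow]
  have hne : w ^ (r + 1) ≠ 0 := by
    intro h0
    rw [h0, zero_mul] at hpow
    exact zero_ne_one hpow
  have hVp : (w⁻¹) ^ (r + 1) = rescale s ((invOneSubPow ℂ (r + 1)).val) :=
    mul_left_cancel₀ hne (hpow.trans hval.symm)
  rw [hVp, coeff_rescale, invOneSubPow_val_succ_eq_mk_add_choose, coeff_mk, mul_comm]

end AlphaDerivAux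

end AlphaDerivAux

/-- The generating series `G_{x,y}(B) = (Σ_{i,j} x_i ((I − τB)^{-1})_{i,j} y_j) · det(I − τB)^{-1}`
in `ℂ[[τ]]`.  Here `(I − τB)⁻¹` is the matrix inverse over `ℂ[[τ]]` (which is the genuine
two-sided inverse, since `det(I − τB)` has constant term `1`, hence is a unit), and the last
factor uses the power series inverse. -/
noncomputable def genG {n : ℕ} (x y : Fin n → ℂ) (B : Matrix (Fin n) (Fin n) ℂ) :
    PowerSeries ℂ :=
  (∑ i, ∑ j, (PowerSeries.C (R := ℂ)) (x i) *
      (((1 - (PowerSeries.X : PowerSeries ℂ) • B.map ((PowerSeries.C (R := ℂ))) : Matrix (Fin n) (Fin n) (PowerSeries ℂ))⁻¹) i j) * (PowerSeries.C (R := ℂ)) (y j)) *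
    ((1 - (PowerSeries.X : PowerSeries ℂ) • B.map ((PowerSeries.C (R := ℂ)))).det)⁻¹

namespace AlphaDerivAux

lemma key (n : ℕ) (A : Matrix (Fin n) (Fin n) ℂ) (x y : Fin n → ℂ) (m : ℕ) (s : ℂ) :
    PowerSeries.coeff (R := ℂ) m (genG x y (A + s • 1)) =
      ∑ k ∈ range (m + 1),
        (Nat.choose (n + m) (m - k) : ℂ) * s ^ (m - k) * PowerSeries.coeff (R := ℂ) k (genG x y A) := by
  classical
  set w : ℂ⟦X⟧ := 1 - PowerSeries.C (R := ℂ) s * X with hwdef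
  have hw0 : constantCoeff (R := ℂ) w = 1 := by simp [hwdef]
  have hwV : w * w⁻¹ = 1 := PowerSeries.mul_inv_cancel _ (by rw [hw0]; exact one_ne_zero)
  set V : ℂ⟦X⟧ := w⁻¹ with hVdef
  set u : ℂ⟦X⟧ := X * V with hudef
  have hu : constantCoeff (R := ℂ) u = 0 := by
    rw [hudef, map_mul, constantCoeff_X, zero_mul]
  set M : Matrix (Fin n) (Fin n) ℂ⟦X⟧ := A.map (PowerSeries.C (R := ℂ)) with hMdef
  set Y : Matrix (Fin n) (Fin n) ℂ⟦X⟧ := 1 - (X : ℂ⟦X⟧) • M with hYdef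
  set Z : Matrix (Fin n) (Fin n) ℂ⟦X⟧ := 1 - u • M with hZdef
  set Φ : ℂ⟦X⟧ →+* ℂ⟦X⟧ := ev u hu with hPhidef
  -- the matrix for A + s•1
  have hmap : (A + s • (1 : Matrix (Fin n) (Fin n) ℂ)).map (PowerSeries.C (R := ℂ))
      = M + PowerSeries.C (R := ℂ) s • (1 : Matrix (Fin n) (Fin n) ℂ⟦X⟧) := by
    ext i j
    simp [hMdef, Matrix.map_apply, Matrix.add_apply, Matrix.smul_apply, Matrix.one_apply,
      apply_ite (PowerSeries.C (R := ℂ)), mul_ite]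
  have hwu : w * u = X := by
    calc w * u = X * (w * V) := by rw [hudef]; ring
      _ = X := by rw [hwV, mul_one]
  have hYs : (1 : Matrix (Fin n) (Fin n) ℂ⟦X⟧)
      - (X : ℂ⟦X⟧) • ((A + s • 1).map (PowerSeries.C (R := ℂ))) = Z * (w • 1) := by
    rw [hmap, smul_add, smul_smul]
    have h1 : Z * (w • 1) = w • Z := by rw [Matrix.mul_smul, mul_one]
    rw [h1, hZdef, smul_sub, smul_smul, hwu]
    have h2 : w • (1 : Matrix (Fin n) (Fin n) ℂ⟦X⟧)
        = 1 - (PowerSeries.C (R := ℂ) s * X) • (1 : Matrix (Fin n) (Fin n) ℂ⟦X⟧) := by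
      rw [hwdef, sub_smul, one_smul]
    rw [h2, mul_comm (X : ℂ⟦X⟧) (PowerSeries.C (R := ℂ) s)]
    abel
  have hdetY0 : constantCoeff (R := ℂ) Y.det = 1 :=
    constantCoeff_det_one_sub_smul X constantCoeff_X M
  have hdetZ0 : constantCoeff (R := ℂ) Z.det = 1 :=
    constantCoeff_det_one_sub_smul u hu M
  have hYdetne : constantCoeff (R := ℂ) Y.det ≠ 0 := by rw [hdetY0]; exact one_ne_zero
  have hZdetne : constantCoeff (R := ℂ) Z.det ≠ 0 := by rw [hdetZ0]; exact one_ne_zero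
  have hYunit : IsUnit Y.det :=
    IsUnit.of_mul_eq_one _ (PowerSeries.mul_inv_cancel _ hYdetne)
  have hZunit : IsUnit Z.det :=
    IsUnit.of_mul_eq_one _ (PowerSeries.mul_inv_cancel _ hZdetne)
  have hPhiY : Φ.mapMatrix Y = Z := by
    ext i j
    simp only [RingHom.mapMatrix_apply, Matrix.map_apply, hYdef, hZdef, Matrix.sub_apply,
      Matrix.smul_apply, smul_eq_mul]
    rw [map_sub, map_mul, ev_X, hMdef, Matrix.map_apply, ev_C]
    congr 1
    rw [Matrix.one_apply, apply_ite Φ, map_one, map_zero]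
  have hmulY : Y * Y⁻¹ = 1 := Matrix.mul_nonsing_inv _ hYunit
  have h1 : Z * Φ.mapMatrix Y⁻¹ = 1 := by
    rw [← hPhiY, ← map_mul, hmulY, map_one]
  have hZinv : Z⁻¹ = Φ.mapMatrix Y⁻¹ := Matrix.inv_eq_right_inv h1
  have hZmul : Z * Z⁻¹ = 1 := Matrix.mul_nonsing_inv _ hZunit
  have hWsinv : (1 - (X : ℂ⟦X⟧) • ((A + s • 1).map (PowerSeries.C (R := ℂ))))⁻¹ = V • Z⁻¹ := by
    refine Matrix.inv_eq_right_inv ?_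
    rw [hYs]
    have hZw : Z * (w • 1) = w • Z := by rw [Matrix.mul_smul, mul_one]
    calc Z * (w • 1) * (V • Z⁻¹) = (w • Z) * (V • Z⁻¹) := by rw [hZw]
      _ = (w * V) • (Z * Z⁻¹) := by
          rw [Matrix.smul_mul, Matrix.mul_smul, smul_smul]
      _ = 1 := by rw [hwV, hZmul, one_smul]
  have hdet_s : (1 - (X : ℂ⟦X⟧) • ((A + s • 1).map (PowerSeries.C (R := ℂ)))).det = Z.det * w ^ n := by
    rw [hYs, Matrix.det_mul, Matrix.det_smul, Matrix.det_one, mul_one, Fintype.card_fin]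
  have hdinv : ((1 - (X : ℂ⟦X⟧) • ((A + s • 1).map (PowerSeries.C (R := ℂ)))).det)⁻¹
      = Z.det⁻¹ * V ^ n := by
    refine psinv_eq ?_ ?_
    · rw [constantCoeff_det_one_sub_smul X constantCoeff_X]; exact one_ne_zero
    · rw [hdet_s]
      calc Z.det * w ^ n * (Z.det⁻¹ * V ^ n)
          = (Z.det * Z.det⁻¹) * (w * V) ^ n := by rw [mul_pow]; ring
        _ = 1 := by rw [PowerSeries.mul_inv_cancel _ hZdetne, hwV, one_pow, mul_one]
  have hPhidet : Φ Y.det = Z.det := by rw [RingHom.map_det, hPhiY]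
  have hPhidinv : Φ (Y.det⁻¹) = Z.det⁻¹ := by
    refine (psinv_eq hZdetne ?_).symm
    rw [← hPhidet, ← map_mul, PowerSeries.mul_inv_cancel _ hYdetne, map_one]
  -- the main algebraic identity
  have hMain : genG x y (A + s • 1) = V ^ (n + 1) * Φ (genG x y A) := by
    unfold genG
    rw [hWsinv, hdinv, map_mul, hPhidinv, map_sum]
    have hsum : ∀ i, Φ (∑ j, PowerSeries.C (R := ℂ) (x i) * (Y⁻¹ i j) * PowerSeries.C (R := ℂ) (y j))
        = ∑ j, PowerSeries.C (R := ℂ) (x i) * (Z⁻¹ i j) * PowerSeries.C (R := ℂ) (y j) := by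
      intro i
      rw [map_sum]
      refine Finset.sum_congr rfl fun j _ => ?_
      rw [map_mul, map_mul, ev_C, ev_C, hZinv]
      rfl
    rw [Finset.sum_congr rfl fun i _ => hsum i]
    have hpull : (∑ i, ∑ j, PowerSeries.C (R := ℂ) (x i) * ((V • Z⁻¹) i j) * PowerSeries.C (R := ℂ) (y j))
        = V * ∑ i, ∑ j, PowerSeries.C (R := ℂ) (x i) * (Z⁻¹ i j) * PowerSeries.C (R := ℂ) (y j) := by
      rw [Finset.mul_sum]
      refine Finset.sum_congr rfl fun i _ => ?_
      rw [Finset.mul_sum]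
      refine Finset.sum_congr rfl fun j _ => ?_
      rw [Matrix.smul_apply, smul_eq_mul]
      ring
    rw [hpull, pow_succ]
    ring
  -- coefficient extraction
  rw [hMain, PowerSeries.coeff_mul]
  have hterm : ∀ p ∈ antidiagonal m,
      PowerSeries.coeff (R := ℂ) p.1 (V ^ (n + 1)) * PowerSeries.coeff (R := ℂ) p.2 (Φ (genG x y A))
      = ∑ k ∈ range (m + 1), PowerSeries.coeff (R := ℂ) k (genG x y A) *
          (PowerSeries.coeff (R := ℂ) p.1 (V ^ (n + 1)) * PowerSeries.coeff (R := ℂ) p.2 (u ^ k)) := by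
    intro p hp
    have hp' := Finset.HasAntidiagonal.mem_antidiagonal.mp hp
    rw [hPhidef, coeff_ev u hu _ (show p.2 < m + 1 by omega), Finset.mul_sum]
    exact Finset.sum_congr rfl fun k _ => by ring
  rw [Finset.sum_congr rfl hterm, Finset.sum_comm]
  refine Finset.sum_congr rfl fun k hk => ?_
  have hk' : k ≤ m := Nat.lt_succ_iff.mp (Finset.mem_range.mp hk)
  rw [← Finset.mul_sum, ← PowerSeries.coeff_mul]
  have hupow : V ^ (n + 1) * u ^ k = X ^ k * V ^ (n + k + 1) := by
    rw [hudef, mul_pow, pow_add, pow_add]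
    ring
  rw [hupow, show m = (m - k) + k from (Nat.sub_add_cancel hk').symm,
    PowerSeries.coeff_X_pow_mul, show n + k + 1 = (n + k) + 1 from rfl, coeff_V_pow]
  have hchoose : Nat.choose ((n + k) + (m - k)) (n + k) = Nat.choose (n + m) (m - k) := by
    rw [show (n + k) + (m - k) = n + m by omega, show n + k = (n + m) - (m - k) by omega]
    exact Nat.choose_symm (by omega)
  rw [hchoose, show (m - k) + k - k = m - k by omega,
    show m - k + k = m from Nat.sub_add_cancel hk']
  ring

end AlphaDerivAux

theorem alpha_deriv (n : ℕ) (hn : 1 ≤ n) (A : Matrix (Fin n) (Fin n) ℂ)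
    (x y : Fin n → ℂ) (m : ℕ) (hm : 1 ≤ m) :
    HasDerivAt (fun s : ℂ => PowerSeries.coeff (R := ℂ) m (genG x y (A + s • 1)))
      ((n + m : ℂ) * PowerSeries.coeff (R := ℂ) (m - 1) (genG x y A)) 0 := by
  have hfun : (fun s : ℂ => PowerSeries.coeff (R := ℂ) m (genG x y (A + s • 1)))
      = fun s : ℂ => ∑ k ∈ Finset.range (m + 1),
          (Nat.choose (n + m) (m - k) : ℂ) * s ^ (m - k) *
            PowerSeries.coeff (R := ℂ) k (genG x y A) :=
    funext fun s => AlphaDerivAux.key n A x y m s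
  rw [hfun]
  have h : HasDerivAt
      (fun s : ℂ => ∑ k ∈ Finset.range (m + 1),
        (Nat.choose (n + m) (m - k) : ℂ) * s ^ (m - k) *
          PowerSeries.coeff (R := ℂ) k (genG x y A))
      (∑ k ∈ Finset.range (m + 1),
        ((Nat.choose (n + m) (m - k) : ℂ) * ((m - k : ℕ) * (0 : ℂ) ^ (m - k - 1))) *
          PowerSeries.coeff (R := ℂ) k (genG x y A)) 0 :=
    HasDerivAt.fun_sum fun k _ =>
      (((hasDerivAt_pow (m - k) (0 : ℂ)).const_mul
        ((Nat.choose (n + m) (m - k) : ℂ))).mul_const _)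
  convert h using 1
  rw [Finset.sum_eq_single (m - 1)]
  · have h1 : m - (m - 1) = 1 := by omega
    rw [h1]
    simp only [Nat.choose_one_right, pow_zero, Nat.cast_one]
    push_cast
    ring
  · intro k hk hne
    have hk' : k ≤ m := Nat.lt_succ_iff.mp (Finset.mem_range.mp hk)
    rcases Nat.lt_or_ge k m with hlt | hge
    · have h2 : m - k - 1 ≠ 0 := by omega
      rw [zero_pow h2]
      ring
    · have hkm : k = m := le_antisymm hk' hge
      rw [hkm, Nat.sub_self]
      simp
  · intro hmem
    exact absurd (Finset.mem_range.mpr (by omega)) hmem
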